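/- Unions of likelihood events are positively correlated: for any subsets U₁, U₂ ⊆ F₂^K, ν( (∪_{u∈U₁} E'_u) ∩ (∪_{ũ∈U₂} E'_ũ) ) ≥ ν(∪_{u∈U₁} E'_u) · ν(∪_{ũ∈U₂} E'_ũ). -/

import Mathlib

/-- The support `I_u` of the codeword `uG`: the positions where `uG` equals 1. -/
def Iu {K N : ℕ} (G : Matrix (Fin K) (Fin N) (ZMod 2)) (u : Fin K → ZMod 2) :
    Finset (Fin N) :=
  Finset.univ.filter (fun i => Matrix.vecMul u G i = 1)

/-- The product measure on `Fin N → Y` whose coordinates are i.i.d. with law `p0`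
(the channel output distribution when the all-zero codeword is sent). -/
noncomputable def nuMeas {Y : Type} [Fintype Y] {N : ℕ} (p0 : Y → ℝ)
    (S : Set (Fin N → Y)) : ℝ :=
  ∑ y : Fin N → Y, Set.indicator S (fun y => ∏ i, p0 (y i)) y

/-- `E'_u`: the event that the likelihood of message `u` given `y` is at least
that of the all-zero message. -/
def Eu' {Y : Type} {K N : ℕ} (G : Matrix (Fin K) (Fin N) (ZMod 2))
    (p0 p1 : Y → ℝ) (u : Fin K → ZMod 2) : Set (Fin N → Y) :=
  {y | ∏ i ∈ Iu G u, p0 (y i) ≤ ∏ i ∈ Iu G u, p1 (y i)}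

/-- Unions of likelihood events are positively correlated. -/
theorem Eu'_unions_pos_correlated (Y : Type) [Fintype Y] (K N : ℕ)
    (G : Matrix (Fin K) (Fin N) (ZMod 2)) (p0 p1 : Y → ℝ)
    (hp0 : ∀ y, 0 ≤ p0 y) (hp1 : ∀ y, 0 ≤ p1 y)
    (hp0sum : ∑ y, p0 y = 1) (hp1sum : ∑ y, p1 y = 1)
    (U₁ U₂ : Set (Fin K → ZMod 2)) :
    nuMeas p0 ((⋃ u ∈ U₁, Eu' G p0 p1 u) ∩ ⋃ u ∈ U₂, Eu' G p0 p1 u)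
      ≥ nuMeas p0 (⋃ u ∈ U₁, Eu' G p0 p1 u)
          * nuMeas p0 (⋃ u ∈ U₂, Eu' G p0 p1 u) := by
  classical
  -- likelihood-ratio statistic; "dead" symbols (p0 = p1 = 0) are put at the top
  set ρ : Y → ℝ := fun y => if p0 y = 0 ∧ p1 y = 0 then 2 else p1 y / (p0 y + p1 y) with hρdef
  obtain ⟨e⟩ : Nonempty (Y ≃ Fin (Fintype.card Y)) := ⟨Fintype.equivFin Y⟩
  have hkey : Function.Injective
      (fun y => toLex (ρ y, e y) : Y → ℝ ×ₗ Fin (Fintype.card Y)) := by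
    intro a b h
    have h2 := congrArg (fun p => (ofLex p).2) h
    exact e.injective h2
  letI : LinearOrder Y := LinearOrder.lift' _ hkey
  -- the order refines the ratio order
  have hmono : ∀ a b : Y, a ≤ b → ρ a ≤ ρ b := by
    intro a b h
    have h' : toLex (ρ a, e a) ≤ toLex (ρ b, e b) := h
    rcases Prod.Lex.le_iff.1 h' with h'' | h''
    · exact le_of_lt h''
    · exact le_of_eq h''.1
  -- key per-coordinate consequence of `ρ a ≤ ρ b`
  have hcoord : ∀ a b : Y, ρ a ≤ ρ b →
      (p0 b = 0 ∧ p1 b = 0) ∨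
        (0 < p0 a + p1 a ∧ 0 < p0 b + p1 b ∧ p1 a * p0 b ≤ p1 b * p0 a) := by
    intro a b hab
    by_cases hb : p0 b = 0 ∧ p1 b = 0
    · exact Or.inl hb
    right
    have hsb : 0 < p0 b + p1 b := by
      rcases lt_or_eq_of_le (add_nonneg (hp0 b) (hp1 b)) with h | h
      · exact h
      · exact absurd ⟨le_antisymm (by linarith [hp1 b]) (hp0 b),
          le_antisymm (by linarith [hp0 b]) (hp1 b)⟩ hb
    have hρb : ρ b = p1 b / (p0 b + p1 b) := by simp [hρdef, hb]
    have hρb1 : ρ b ≤ 1 := by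
      rw [hρb]; exact div_le_one_of_le₀ (by linarith [hp0 b]) (le_of_lt hsb)
    have ha : ¬(p0 a = 0 ∧ p1 a = 0) := by
      intro h
      have : ρ a = 2 := by simp [hρdef, h]
      linarith [hab.trans hρb1]
    have hsa : 0 < p0 a + p1 a := by
      rcases lt_or_eq_of_le (add_nonneg (hp0 a) (hp1 a)) with h | h
      · exact h
      · exact absurd ⟨le_antisymm (by linarith [hp1 a]) (hp0 a),
          le_antisymm (by linarith [hp0 a]) (hp1 a)⟩ ha
    have hρa : ρ a = p1 a / (p0 a + p1 a) := by simp [hρdef, ha]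
    refine ⟨hsa, hsb, ?_⟩
    rw [hρa, hρb, div_le_div_iff₀ hsa hsb] at hab
    nlinarith [hab]
  -- each event `E'_u` is an upper set
  have hupper : ∀ u : Fin K → ZMod 2, ∀ y y' : Fin N → Y,
      (∀ i, ρ (y i) ≤ ρ (y' i)) → y ∈ Eu' G p0 p1 u → y' ∈ Eu' G p0 p1 u := by
    intro u y y' hle hy
    have hy : ∏ i ∈ Iu G u, p0 (y i) ≤ ∏ i ∈ Iu G u, p1 (y i) := hy
    show ∏ i ∈ Iu G u, p0 (y' i) ≤ ∏ i ∈ Iu G u, p1 (y' i)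
    by_cases hdead : ∃ i ∈ Iu G u, p0 (y' i) = 0 ∧ p1 (y' i) = 0
    · obtain ⟨i, hi, h0, h1⟩ := hdead
      rw [Finset.prod_eq_zero hi h0, Finset.prod_eq_zero hi h1]
    push_neg at hdead
    have hcr : ∀ i ∈ Iu G u, 0 < p0 (y i) + p1 (y i) ∧
        p1 (y i) * p0 (y' i) ≤ p1 (y' i) * p0 (y i) := by
      intro i hi
      rcases hcoord (y i) (y' i) (hle i) with h | ⟨_, _, h⟩
      · exact absurd h.1 (fun h0 => (hdead i hi h0) h.2)
      · rcases hcoord (y i) (y' i) (hle i) with h' | ⟨hsa, _, _⟩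
        · exact absurd h'.1 (fun h0 => (hdead i hi h0) h'.2)
        · exact ⟨hsa, h⟩
    by_cases h0 : ∏ i ∈ Iu G u, p0 (y' i) = 0
    · rw [h0]; exact Finset.prod_nonneg fun i _ => hp1 (y' i)
    -- every `p1 (y i)` is positive
    have hp1pos : ∀ i ∈ Iu G u, 0 < p1 (y i) := by
      intro j hj
      rcases lt_or_eq_of_le (hp1 (y j)) with h | h
      · exact h
      exfalso
      have hzero : ∏ i ∈ Iu G u, p0 (y i) = 0 :=
        le_antisymm (hy.trans_eq (Finset.prod_eq_zero hj h.symm))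
          (Finset.prod_nonneg fun i _ => hp0 (y i))
      obtain ⟨j', hj', hj'0⟩ := Finset.prod_eq_zero_iff.1 hzero
      have h1 : 0 < p1 (y j') := by
        have := (hcr j' hj').1; linarith [hp0 (y j'), hp1 (y j'), hj'0]
      have := (hcr j' hj').2
      rw [hj'0, mul_zero] at this
      have : p0 (y' j') = 0 := by nlinarith [hp0 (y' j')]
      exact h0 (Finset.prod_eq_zero hj' this)
    have hprodpos : 0 < ∏ i ∈ Iu G u, p1 (y i) :=
      Finset.prod_pos hp1pos
    have hchain : (∏ i ∈ Iu G u, p1 (y i)) * ∏ i ∈ Iu G u, p0 (y' i)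
        ≤ (∏ i ∈ Iu G u, p1 (y i)) * ∏ i ∈ Iu G u, p1 (y' i) := by
      calc (∏ i ∈ Iu G u, p1 (y i)) * ∏ i ∈ Iu G u, p0 (y' i)
          = ∏ i ∈ Iu G u, (p1 (y i) * p0 (y' i)) := by rw [Finset.prod_mul_distrib]
        _ ≤ ∏ i ∈ Iu G u, (p1 (y' i) * p0 (y i)) :=
            Finset.prod_le_prod (fun i _ => mul_nonneg (hp1 _) (hp0 _))
              (fun i hi => (hcr i hi).2)
        _ = (∏ i ∈ Iu G u, p1 (y' i)) * ∏ i ∈ Iu G u, p0 (y i) := by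
            rw [Finset.prod_mul_distrib]
        _ ≤ (∏ i ∈ Iu G u, p1 (y' i)) * ∏ i ∈ Iu G u, p1 (y i) :=
            mul_le_mul_of_nonneg_left hy
              (Finset.prod_nonneg fun i _ => hp1 (y' i))
        _ = (∏ i ∈ Iu G u, p1 (y i)) * ∏ i ∈ Iu G u, p1 (y' i) := mul_comm _ _
    exact le_of_mul_le_mul_left hchain hprodpos
  -- set up the FKG inequality
  set μ : (Fin N → Y) → ℝ := fun y => ∏ i, p0 (y i) with hμdef
  have hμ0 : 0 ≤ μ := fun y => Finset.prod_nonneg fun i _ => hp0 (y i)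
  set S₁ : Set (Fin N → Y) := ⋃ u ∈ U₁, Eu' G p0 p1 u with hS₁
  set S₂ : Set (Fin N → Y) := ⋃ u ∈ U₂, Eu' G p0 p1 u with hS₂
  set f : (Fin N → Y) → ℝ := S₁.indicator 1 with hfdef
  set g : (Fin N → Y) → ℝ := S₂.indicator 1 with hgdef
  have hf0 : 0 ≤ f := fun y => Set.indicator_nonneg (fun _ _ => zero_le_one) y
  have hg0 : 0 ≤ g := fun y => Set.indicator_nonneg (fun _ _ => zero_le_one) y
  have hupperS : ∀ (U : Set (Fin K → ZMod 2)) (y y' : Fin N → Y), y ≤ y' →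
      y ∈ ⋃ u ∈ U, Eu' G p0 p1 u → y' ∈ ⋃ u ∈ U, Eu' G p0 p1 u := by
    intro U y y' hle hy
    obtain ⟨u, hu, hyu⟩ := Set.mem_iUnion₂.1 hy
    exact Set.mem_iUnion₂.2 ⟨u, hu, hupper u y y' (fun i => hmono _ _ (hle i)) hyu⟩
  have hfmono : Monotone f := by
    intro a b hab
    by_cases ha : a ∈ S₁
    · rw [hfdef, Set.indicator_of_mem ha, Set.indicator_of_mem (hupperS U₁ a b hab ha)]; exact le_rfl
    · rw [hfdef, Set.indicator_of_notMem ha]; exact hf0 b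
  have hgmono : Monotone g := by
    intro a b hab
    by_cases ha : a ∈ S₂
    · rw [hgdef, Set.indicator_of_mem ha, Set.indicator_of_mem (hupperS U₂ a b hab ha)]; exact le_rfl
    · rw [hgdef, Set.indicator_of_notMem ha]; exact hg0 b
  have hμsup : ∀ a b : Fin N → Y, μ a * μ b ≤ μ (a ⊓ b) * μ (a ⊔ b) := by
    intro a b
    have : μ (a ⊓ b) * μ (a ⊔ b) = μ a * μ b := by
      rw [hμdef]
      simp only [← Finset.prod_mul_distrib]
      refine Finset.prod_congr rfl fun i _ => ?_
      rcases le_total (a i) (b i) with h | h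
      · simp [Pi.inf_apply, Pi.sup_apply, inf_eq_left.2 h, sup_eq_right.2 h]
      · simp [Pi.inf_apply, Pi.sup_apply, inf_eq_right.2 h, sup_eq_left.2 h, mul_comm]
    rw [this]
  have hμsum : ∑ y : Fin N → Y, μ y = 1 := by
    rw [hμdef]
    have := Finset.prod_univ_sum (fun _ : Fin N => (Finset.univ : Finset Y))
      (fun _ y => p0 y)
    rw [Fintype.piFinset_univ] at this
    rw [← this]
    simp [hp0sum]
  have key := fkg (μ := μ) (f := f) (g := g) hμ0 hf0 hg0 hfmono hgmono hμsup
  rw [hμsum, one_mul] at key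
  have hind : ∀ (S : Set (Fin N → Y)),
      nuMeas p0 S = ∑ y : Fin N → Y, μ y * S.indicator 1 y := by
    intro S
    refine Finset.sum_congr rfl fun y _ => ?_
    by_cases hy : y ∈ S
    · simp [Set.indicator_of_mem hy, hμdef]
    · simp [Set.indicator_of_notMem hy]
  have h1 : nuMeas p0 S₁ = ∑ y : Fin N → Y, μ y * f y := hind S₁
  have h2 : nuMeas p0 S₂ = ∑ y : Fin N → Y, μ y * g y := hind S₂
  have h3 : nuMeas p0 (S₁ ∩ S₂) = ∑ y : Fin N → Y, μ y * (f y * g y) := by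
    rw [hind (S₁ ∩ S₂)]
    refine Finset.sum_congr rfl fun y _ => ?_
    congr 1
    rw [hfdef, hgdef]
    have := Set.inter_indicator_mul (f := (1 : (Fin N → Y) → ℝ))
      (g := (1 : (Fin N → Y) → ℝ)) (s := S₁) (t := S₂) y
    simp only [Pi.one_apply, mul_one] at this ⊢
    rw [← this]; rfl
  rw [ge_iff_le, h1, h2, h3]
  exact key
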